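/- If A is a connected subset of a metric space M, then diam A ≤ H^1(A), where H^1 is one-dimensional Hausdorff measure. -/
import Mathlib

open scoped ENNReal MeasureTheory

theorem diam_le_hausdorffMeasure_one_of_connected {M : Type*} [MetricSpace M]
    [MeasurableSpace M] [BorelSpace M] (A : Set M) (hA : IsConnected A) :
    EMetric.diam A ≤ μH[1] A := by
  apply EMetric.diam_le
  intro x hx y hy
  have hlip : LipschitzWith 1 (fun z => dist x z) := LipschitzWith.dist_right x
  have himg : μH[1] ((fun z => dist x z) '' A) ≤ μH[1] A := by
    simpa using hlip.hausdorffMeasure_image_le (d := 1) (by norm_num) A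
  have hconn : IsPreconnected ((fun z => dist x z) '' A) :=
    hA.isPreconnected.image _ (hlip.continuous.continuousOn)
  have hIcc : Set.Icc 0 (dist x y) ⊆ (fun z => dist x z) '' A := by
    apply hconn.Icc_subset
    · exact ⟨x, hx, by simp⟩
    · exact ⟨y, hy, rfl⟩
  calc edist x y = MeasureTheory.volume (Set.Icc 0 (dist x y)) := by
        rw [Real.volume_Icc, edist_dist]; simp
    _ = μH[1] (Set.Icc 0 (dist x y)) := by rw [MeasureTheory.hausdorffMeasure_real]
    _ ≤ μH[1] ((fun z => dist x z) '' A) := MeasureTheory.measure_mono hIcc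
    _ ≤ μH[1] A := himg
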